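/- For γ > 0 and τ > -2, the coefficients d_k = 2 ∫_0^∞ t^{τ+4k+1} e^{-t² - γt⁶} dt / Γ((τ+4k+2)/2) satisfy d_k ≤ C(γ,τ) (12e²γ)^{-2k/3} k^{-4k/3} k^{-4β/3} for large k with β = (τ+2)/4; consequently for any sequence f_k with |f_k| ≤ A(a/e)^k k^{k+b+1/2}, the series Σ_k d_k f_k converges absolutely. -/

import Mathlib

open MeasureTheory Real Set

lemma aux_sum6 (φ : ℕ → ℝ) (n : ℕ) :
    ∑ i ∈ Finset.range (6*n), φ (i/6) = 6 * ∑ m ∈ Finset.range n, φ m := by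
  induction n with
  | zero => simp
  | succ n ih =>
    have h6 : 6*(n+1) = 6*n+1+1+1+1+1+1 := by ring
    rw [h6, Finset.sum_range_succ, Finset.sum_range_succ, Finset.sum_range_succ,
      Finset.sum_range_succ, Finset.sum_range_succ, Finset.sum_range_succ, ih,
      Finset.sum_range_succ]
    have e : ∀ j, j < 6 → (6*n+j)/6 = n := by omega
    rw [show 6*n+1+1+1+1+1 = 6*n+5 from rfl, show 6*n+1+1+1+1 = 6*n+4 from rfl,
      show 6*n+1+1+1 = 6*n+3 from rfl, show 6*n+1+1 = 6*n+2 from rfl]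
    rw [e 5 (by norm_num), e 4 (by norm_num), e 3 (by norm_num), e 2 (by norm_num),
      e 1 (by norm_num), show (6*n)/6 = n by omega]
    ring

lemma aux_summable (C F : ℝ) (hC : 0 ≤ C) (hF : 0 ≤ F) :
    Summable (fun n : ℕ => C * F ^ (n/6+2) / (Nat.factorial (n/6+1) : ℝ)) := by
  apply summable_of_sum_range_le (c := 6 * (C * F^2 * Real.exp F))
  · intro n; positivity
  · intro n
    calc ∑ i ∈ Finset.range n, C * F ^ (i/6+2) / (Nat.factorial (i/6+1) : ℝ)
        ≤ ∑ i ∈ Finset.range (6*n), C * F ^ (i/6+2) / (Nat.factorial (i/6+1) : ℝ) := by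
          apply Finset.sum_le_sum_of_subset_of_nonneg
          · exact Finset.range_subset_range.2 (by omega)
          · intro i _ _; positivity
      _ = 6 * ∑ m ∈ Finset.range n, C * F ^ (m+2) / (Nat.factorial (m+1) : ℝ) :=
          aux_sum6 (fun m => C * F ^ (m+2) / (Nat.factorial (m+1) : ℝ)) n
      _ ≤ 6 * ∑ m ∈ Finset.range n, C * F^2 * (F ^ m / (Nat.factorial m : ℝ)) := by
          apply mul_le_mul_of_nonneg_left _ (by norm_num)
          apply Finset.sum_le_sum
          intro m _
          have h1 : (Nat.factorial m : ℝ) ≤ (Nat.factorial (m+1) : ℝ) := by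
            exact_mod_cast Nat.factorial_le (Nat.le_succ m)
          have h2 : (0:ℝ) < Nat.factorial m := by positivity
          calc C * F ^ (m+2) / (Nat.factorial (m+1) : ℝ)
              ≤ C * F ^ (m+2) / (Nat.factorial m : ℝ) := by
                apply div_le_div_of_nonneg_left (by positivity) h2 h1
            _ = C * F^2 * (F ^ m / (Nat.factorial m : ℝ)) := by
                rw [pow_add]; ring
      _ ≤ 6 * (C * F^2 * Real.exp F) := by
          apply mul_le_mul_of_nonneg_left _ (by norm_num)
          calc ∑ m ∈ Finset.range n, C * F^2 * (F ^ m / (Nat.factorial m : ℝ))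
              = C * F^2 * ∑ m ∈ Finset.range n, F ^ m / (Nat.factorial m : ℝ) := by
                rw [Finset.mul_sum]
            _ ≤ C * F^2 * Real.exp F := by
                apply mul_le_mul_of_nonneg_left (Real.sum_le_exp_of_nonneg hF n) (by positivity)

set_option maxHeartbeats 2000000 in
lemma key_bound (τ γ a A b : ℝ) (hτ : -2 < τ) (hγ : 0 < γ)
    (ha : 0 < a) (hA : 0 < A) (f : ℕ → ℝ)
    (hf : ∀ k : ℕ, 1 ≤ k →
      |f k| ≤ A * (a / Real.exp 1) ^ k * (k : ℝ) ^ ((k : ℝ) + b + 1 / 2))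
    (k : ℕ) (hk : 6 ≤ k) :
    |(2 * ∫ t in Ioi (0 : ℝ),
          t ^ (τ + 4 * k + 1) * Real.exp (-t ^ 2 - γ * t ^ 6)) /
        Real.Gamma ((τ + 4 * k + 2) / 2) * f k| ≤
      (A * (Real.Gamma ((τ+2)/2) * (1+(τ+2)/2)^2) * (Nat.factorial ⌈b+1/2⌉₊)) *
        (max ((2*a*(max 1 γ⁻¹))^6) 1) ^ (k/6+1) / (Nat.factorial (k/6)) := by
  have he1 : (0:ℝ) < Real.exp 1 := Real.exp_pos 1
  set β : ℝ := (τ+2)/2 with hβdef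
  have hβ : 0 < β := by rw [hβdef]; linarith
  have hΓβ : 0 < Real.Gamma β := Real.Gamma_pos_of_pos hβ
  set g : ℝ := max 1 γ⁻¹ with hgdef
  have hg1 : (1:ℝ) ≤ g := le_max_left _ _
  have hγg : γ⁻¹ ≤ g := le_max_right _ _
  have hg0 : (0:ℝ) < g := by linarith
  set c : ℕ := ⌈b+1/2⌉₊ with hcdef
  set F : ℝ := max ((2*a*g)^6) 1 with hFdef
  have hF1 : (1:ℝ) ≤ F := le_max_right _ _
  set s : ℕ := 2*k/3 with hsdef
  set r : ℕ := k/6 with hrdef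
  set j : ℕ := 2*k - 3*s with hjdef
  set q : ℕ := 2*k - 1 - s with hqdef
  clear_value β g c F s r j q
  have hj2 : j ≤ 2 := by omega
  have hsj : 3*s + j = 2*k := by omega
  have hsq : s + q = 2*k - 1 := by omega
  have hk2s : k ≤ 2*(s+1) := by omega
  have hkrq : k + r ≤ q := by omega
  have h6r : 6*r ≤ k := by omega
  have hsk : s ≤ k := by omega
  have h1k : 1 ≤ k := by omega
  have hkR : (0:ℝ) < k := by exact_mod_cast h1k
  have hk1R : (1:ℝ) ≤ k := by exact_mod_cast h1k
  set p : ℝ := τ + 1 + 2*j with hpdef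
  have hp : (-1:ℝ) < p := by
    have : (0:ℝ) ≤ (j:ℝ) := Nat.cast_nonneg j
    rw [hpdef]; linarith
  have hfacs : (0:ℝ) < Nat.factorial s := by exact_mod_cast Nat.factorial_pos s
  -- pointwise bound
  have hpt : ∀ t : ℝ, t ∈ Ioi (0:ℝ) →
      t ^ (τ + 4 * k + 1) * Real.exp (-t ^ 2 - γ * t ^ 6) ≤
        ((Nat.factorial s : ℝ) / γ^s) * (t ^ p * Real.exp (-t^2)) := by
    intro t ht
    have ht0 : 0 < t := ht
    have h1 : t ^ (τ + 4*(k:ℝ) + 1) = t ^ p * t^(6*s : ℕ) := by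
      rw [← Real.rpow_natCast t (6*s), ← Real.rpow_add ht0]
      congr 1
      have h62 : 6*(s:ℝ) + 2*(j:ℝ) = 4*(k:ℝ) := by
        have hn : 6*s + 2*j = 4*k := by omega
        exact_mod_cast hn
      rw [hpdef]; push_cast; linarith
    have h2 : Real.exp (-t^2 - γ*t^6) = Real.exp (-t^2) * Real.exp (-(γ*t^6)) := by
      rw [← Real.exp_add]; ring_nf
    have h3 : (t^6)^s * Real.exp (-(γ * t^6)) ≤ (Nat.factorial s : ℝ) / γ^s := by
      have hx : 0 ≤ γ * t^6 := by positivity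
      have hb1 : (γ * t^6)^s / (Nat.factorial s : ℝ) ≤ Real.exp (γ * t^6) :=
        Real.pow_div_factorial_le_exp _ hx s
      have hb2 : γ^s * (t^6)^s ≤ (Nat.factorial s : ℝ) * Real.exp (γ * t^6) := by
        rw [div_le_iff₀ (by positivity)] at hb1
        rw [mul_pow] at hb1
        linarith
      rw [Real.exp_neg, mul_inv_le_iff₀ (Real.exp_pos _), div_mul_eq_mul_div,
        le_div_iff₀ (by positivity : (0:ℝ) < γ^s)]
      nlinarith [Real.exp_pos (γ * t^6)]
    have hrp : (0:ℝ) ≤ t ^ p := Real.rpow_nonneg ht0.le p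
    calc t ^ (τ + 4*(k:ℝ) + 1) * Real.exp (-t^2 - γ*t^6)
        = (t ^ p * Real.exp (-t^2)) * (t^(6*s:ℕ) * Real.exp (-(γ*t^6))) := by
          rw [h1, h2]; ring
      _ ≤ (t ^ p * Real.exp (-t^2)) * ((Nat.factorial s : ℝ) / γ^s) := by
          apply mul_le_mul_of_nonneg_left _ (by positivity)
          rw [pow_mul]; exact h3
      _ = ((Nat.factorial s : ℝ) / γ^s) * (t ^ p * Real.exp (-t^2)) := by ring
  -- integrability of the dominating function
  have hint : IntegrableOn (fun t : ℝ => t ^ p * Real.exp (-t^2)) (Ioi 0) := by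
    have h := integrableOn_rpow_mul_exp_neg_mul_sq (b := 1) one_pos hp
    simpa using h
  -- integral bound
  have hIbound : (∫ t in Ioi (0:ℝ), t ^ (τ + 4 * k + 1) * Real.exp (-t ^ 2 - γ * t ^ 6))
      ≤ ((Nat.factorial s : ℝ) / γ^s) * ∫ t in Ioi (0:ℝ), t ^ p * Real.exp (-t^2) := by
    rw [← integral_const_mul]
    apply integral_mono_of_nonneg
    · filter_upwards [ae_restrict_mem measurableSet_Ioi] with t ht
      have ht0 : 0 < t := ht
      exact mul_nonneg (Real.rpow_nonneg ht0.le _) (Real.exp_nonneg _)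
    · exact hint.const_mul _
    · filter_upwards [ae_restrict_mem measurableSet_Ioi] with t ht
      exact hpt t ht
  -- integral nonneg
  have hInn : 0 ≤ ∫ t in Ioi (0:ℝ), t ^ (τ + 4 * k + 1) * Real.exp (-t ^ 2 - γ * t ^ 6) := by
    apply setIntegral_nonneg measurableSet_Ioi
    intro t ht
    exact mul_nonneg (Real.rpow_nonneg (le_of_lt ht) _) (Real.exp_nonneg _)
  -- evaluation of dominating integral
  have hval : ∫ t in Ioi (0:ℝ), t ^ p * Real.exp (-t^2) = (1/2) * Real.Gamma ((p+1)/2) := by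
    have h : ∀ x ∈ Ioi (0:ℝ), x ^ p * Real.exp (-x^2) = x ^ p * Real.exp (-x ^ (2:ℝ)) := by
      intro x hx
      rw [show ((2:ℝ)) = ((2:ℕ):ℝ) by norm_num, Real.rpow_natCast]
    rw [setIntegral_congr_fun measurableSet_Ioi h,
      integral_rpow_mul_exp_neg_rpow two_pos hp]
  have hargj : (p+1)/2 = β + j := by rw [hpdef, hβdef]; ring
  -- Gamma(β+j) ≤ Gamma β * (1+β)^2
  have hΓj : Real.Gamma (β + j) ≤ Real.Gamma β * (1+β)^2 := by
    have hj012 : j = 0 ∨ j = 1 ∨ j = 2 := by omega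
    rcases hj012 with h | h | h <;> rw [h]
    · simp only [Nat.cast_zero, add_zero]
      nlinarith [mul_pos hΓβ hβ, mul_pos (mul_pos hΓβ hβ) hβ]
    · simp only [Nat.cast_one]
      rw [Real.Gamma_add_one hβ.ne']
      nlinarith [mul_pos hΓβ hβ, mul_pos (mul_pos hΓβ hβ) hβ]
    · simp only [Nat.cast_ofNat]
      rw [show β + 2 = (β+1) + 1 by ring, Real.Gamma_add_one (by linarith),
        Real.Gamma_add_one hβ.ne']
      nlinarith [mul_pos hΓβ hβ, mul_pos (mul_pos hΓβ hβ) hβ]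
  -- denominator
  have hden_eq : (τ + 4*(k:ℝ)+2)/2 = 2*(k:ℝ) + β := by rw [hβdef]; ring
  have hdpos : 0 < Real.Gamma ((τ + 4*(k:ℝ)+2)/2) := by
    rw [hden_eq]; exact Real.Gamma_pos_of_pos (by nlinarith)
  have hfacd : (0:ℝ) < Nat.factorial (2*k-1) := by exact_mod_cast Nat.factorial_pos _
  have hfac : ((Nat.factorial (2*k-1)) : ℝ) ≤ Real.Gamma ((τ + 4*(k:ℝ)+2)/2) := by
    rw [hden_eq]
    have h2k : Real.Gamma (2*(k:ℝ)) = Nat.factorial (2*k-1) := by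
      rw [show 2*(k:ℝ) = ((2*k-1 : ℕ):ℝ) + 1 by
        have : (1:ℕ) ≤ 2*k := by omega
        push_cast [Nat.cast_sub this]; ring]
      rw [Real.Gamma_nat_eq_factorial]
    rw [← h2k]
    refine (Real.Gamma_strictMonoOn_Ici ?_ ?_ (lt_add_of_pos_right _ hβ)).le
    · simp only [mem_Ici]; nlinarith
    · simp only [mem_Ici]; nlinarith
  -- positivity facts
  have hγs : (0:ℝ) < γ^s := pow_pos hγ s
  have hgk : (0:ℝ) < g^k := pow_pos hg0 k
  have hF0 : (0:ℝ) < F := by linarith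
  have hFr : (0:ℝ) < F^(r+1) := pow_pos hF0 _
  have hrf : (0:ℝ) < (Nat.factorial r : ℝ) := by exact_mod_cast Nat.factorial_pos r
  have hcf : (0:ℝ) < (Nat.factorial c : ℝ) := by exact_mod_cast Nat.factorial_pos c
  have hs1 : (0:ℝ) < (s:ℝ)+1 := by positivity
  have hs1q : (0:ℝ) < ((s:ℝ)+1)^q := pow_pos hs1 q
  have hkk : (0:ℝ) < (k:ℝ)^k := pow_pos hkR k
  have hG2 : (0:ℝ) < Real.Gamma β * (1+β)^2 := mul_pos hΓβ (by positivity)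
  have hCS : (0:ℝ) ≤ (Nat.factorial s : ℝ)/γ^s := by positivity
  -- step 5 : bound on d_k
  rw [hval] at hIbound
  have hnum : 2 * (∫ t in Ioi (0:ℝ), t ^ (τ + 4 * k + 1) * Real.exp (-t ^ 2 - γ * t ^ 6))
      ≤ ((Nat.factorial s : ℝ)/γ^s) * (Real.Gamma β * (1+β)^2) := by
    have h2 : ((Nat.factorial s : ℝ)/γ^s) * Real.Gamma (β + j)
        ≤ ((Nat.factorial s : ℝ)/γ^s) * (Real.Gamma β * (1+β)^2) :=
      mul_le_mul_of_nonneg_left hΓj hCS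
    calc 2 * (∫ t in Ioi (0:ℝ), t ^ (τ + 4 * k + 1) * Real.exp (-t ^ 2 - γ * t ^ 6))
        ≤ 2 * (((Nat.factorial s : ℝ)/γ^s) * (1/2 * Real.Gamma ((p+1)/2))) := by
          linarith [hIbound]
      _ = ((Nat.factorial s : ℝ)/γ^s) * Real.Gamma (β + j) := by rw [hargj]; ring
      _ ≤ ((Nat.factorial s : ℝ)/γ^s) * (Real.Gamma β * (1+β)^2) := h2
  have hd : (2 * ∫ t in Ioi (0:ℝ), t ^ (τ + 4 * k + 1) * Real.exp (-t ^ 2 - γ * t ^ 6)) /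
        Real.Gamma ((τ + 4 * k + 2) / 2)
      ≤ ((Nat.factorial s : ℝ)/γ^s) * (Real.Gamma β * (1+β)^2) / (Nat.factorial (2*k-1) : ℝ) :=
    div_le_div₀ (by positivity) hnum hfacd hfac
  -- step 6
  have habs : |(2 * ∫ t in Ioi (0 : ℝ),
          t ^ (τ + 4 * k + 1) * Real.exp (-t ^ 2 - γ * t ^ 6)) /
        Real.Gamma ((τ + 4 * k + 2) / 2) * f k|
      ≤ (((Nat.factorial s : ℝ)/γ^s) * (Real.Gamma β * (1+β)^2) / (Nat.factorial (2*k-1) : ℝ)) *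
          (A * (a / Real.exp 1) ^ k * (k : ℝ) ^ ((k : ℝ) + b + 1 / 2)) := by
    rw [abs_mul]
    rw [abs_of_nonneg (div_nonneg (by linarith) hdpos.le)]
    apply mul_le_mul hd (hf k h1k) (abs_nonneg _)
    positivity
  refine habs.trans ?_
  -- step 7 : arithmetic crunch
  have hK : (k:ℝ) ^ ((k:ℝ) + b + 1/2) ≤ (k:ℝ)^k * ((Nat.factorial c : ℝ) * (Real.exp 1)^k) := by
    rw [show (k:ℝ)+b+1/2 = (k:ℝ)+(b+1/2) by ring, Real.rpow_add hkR, Real.rpow_natCast]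
    apply mul_le_mul_of_nonneg_left _ hkk.le
    have hbc : b + 1/2 ≤ (c:ℝ) := by rw [hcdef]; exact Nat.le_ceil _
    calc (k:ℝ) ^ (b+1/2) ≤ (k:ℝ) ^ (c:ℝ) :=
          Real.rpow_le_rpow_of_exponent_le hk1R hbc
      _ = (k:ℝ) ^ (c:ℕ) := Real.rpow_natCast _ c
      _ ≤ (Nat.factorial c : ℝ) * (Real.exp 1)^k := by
          have h1 : (k:ℝ)^c / (Nat.factorial c : ℝ) ≤ Real.exp (k:ℝ) :=
            Real.pow_div_factorial_le_exp _ hkR.le c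
          have h2 : Real.exp (k:ℝ) = (Real.exp 1)^k := by
            rw [← Real.exp_nat_mul, mul_one]
          rw [div_le_iff₀ hcf, h2] at h1
          linarith
  have hG : 1/γ^s ≤ g^k := by
    calc 1/γ^s = (γ⁻¹)^s := by rw [one_div, ← inv_pow]
      _ ≤ g^s := pow_le_pow_left₀ (inv_nonneg.mpr hγ.le) hγg s
      _ ≤ g^k := pow_le_pow_right₀ hg1 hsk
  have hfac2 : (Nat.factorial s : ℝ) * ((s:ℝ)+1)^q ≤ (Nat.factorial (2*k-1) : ℝ) := by
    have hn : Nat.factorial s * (s+1)^q ≤ Nat.factorial (2*k-1) := by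
      rw [← hsq]; exact Nat.factorial_mul_pow_le_factorial
    exact_mod_cast hn
  have hhalf : (k:ℝ)/2 ≤ (s:ℝ)+1 := by
    have : (k:ℝ) ≤ 2*((s:ℝ)+1) := by exact_mod_cast hk2s
    linarith
  have hq1 : ((k:ℝ)/2)^(k+r) ≤ ((s:ℝ)+1)^q := by
    calc ((k:ℝ)/2)^(k+r) ≤ ((s:ℝ)+1)^(k+r) := pow_le_pow_left₀ (by positivity) hhalf _
      _ ≤ ((s:ℝ)+1)^q := pow_le_pow_right₀ (by linarith) hkrq
  have hkr : (2:ℝ)^r * (Nat.factorial r : ℝ) ≤ (k:ℝ)^r := by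
    calc (2:ℝ)^r * (Nat.factorial r : ℝ) ≤ (2:ℝ)^r * (r:ℝ)^r := by
          apply mul_le_mul_of_nonneg_left _ (by positivity)
          exact_mod_cast Nat.factorial_le_pow r
      _ = (2*(r:ℝ))^r := by rw [mul_pow]
      _ ≤ (k:ℝ)^r := by
          apply pow_le_pow_left₀ (by positivity)
          have : (6:ℝ)*(r:ℝ) ≤ (k:ℝ) := by exact_mod_cast h6r
          have h0r : (0:ℝ) ≤ r := Nat.cast_nonneg r
          linarith
  have hF2 : (2*a*g)^k ≤ F^(r+1) := by
    rcases le_or_gt 1 (2*a*g) with h | h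
    · calc (2*a*g)^k ≤ (2*a*g)^(6*(r+1)) := pow_le_pow_right₀ h (by omega)
        _ = ((2*a*g)^6)^(r+1) := by rw [← pow_mul]
        _ ≤ F^(r+1) := by
            have h6F : (2*a*g)^6 ≤ F := by rw [hFdef]; exact le_max_left _ _
            exact pow_le_pow_left₀ (by positivity) h6F _
    · calc (2*a*g)^k ≤ 1 := pow_le_one₀ (by positivity) h.le
        _ = (1:ℝ)^(r+1) := (one_pow _).symm
        _ ≤ F^(r+1) := pow_le_pow_left₀ zero_le_one hF1 _
  -- assemble
  calc ((Nat.factorial s : ℝ)/γ^s) * (Real.Gamma β * (1+β)^2) / (Nat.factorial (2*k-1) : ℝ) *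
          (A * (a / Real.exp 1) ^ k * (k : ℝ) ^ ((k : ℝ) + b + 1 / 2))
      ≤ ((Nat.factorial s : ℝ)/γ^s) * (Real.Gamma β * (1+β)^2) / (Nat.factorial (2*k-1) : ℝ) *
          (A * (a / Real.exp 1) ^ k * ((k:ℝ)^k * ((Nat.factorial c : ℝ) * (Real.exp 1)^k))) := by
        apply mul_le_mul_of_nonneg_left _ (by positivity)
        apply mul_le_mul_of_nonneg_left hK (by positivity)
    _ = (A * (Real.Gamma β * (1+β)^2) * (Nat.factorial c : ℝ)) *
          ((Nat.factorial s : ℝ)/(Nat.factorial (2*k-1) : ℝ)) * (1/γ^s) * (a^k * (k:ℝ)^k) := by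
        rw [div_pow]
        field_simp
    _ ≤ (A * (Real.Gamma β * (1+β)^2) * (Nat.factorial c : ℝ)) *
          ((Nat.factorial s : ℝ)/((Nat.factorial s : ℝ)*((s:ℝ)+1)^q)) * (g^k) * (a^k * (k:ℝ)^k) := by
        apply mul_le_mul_of_nonneg_right _ (by positivity)
        apply mul_le_mul _ hG (by positivity) _
        · apply mul_le_mul_of_nonneg_left _ (by positivity)
          exact div_le_div_of_nonneg_left (by positivity) (by positivity) hfac2
        · positivity
    _ = (A * (Real.Gamma β * (1+β)^2) * (Nat.factorial c : ℝ)) *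
          ((a*g)^k * (k:ℝ)^k / ((s:ℝ)+1)^q) := by
        rw [mul_pow]
        field_simp
    _ ≤ (A * (Real.Gamma β * (1+β)^2) * (Nat.factorial c : ℝ)) *
          (F^(r+1) / (Nat.factorial r : ℝ)) := by
        apply mul_le_mul_of_nonneg_left _ (by positivity)
        rw [div_le_div_iff₀ hs1q hrf]
        calc (a*g)^k * (k:ℝ)^k * (Nat.factorial r : ℝ)
            = ((2:ℝ)^k*(a*g)^k) * ((k:ℝ)^k * (Nat.factorial r : ℝ)/2^k) := by
              field_simp
          _ ≤ F^(r+1) * ((k:ℝ)/2)^(k+r) := by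
              apply mul_le_mul _ _ (by positivity) hFr.le
              · calc (2:ℝ)^k*(a*g)^k = (2*a*g)^k := by rw [← mul_pow]; ring_nf
                  _ ≤ F^(r+1) := hF2
              · rw [div_pow, pow_add, pow_add, div_le_div_iff₀ (by positivity) (by positivity)]
                calc (k:ℝ)^k * (Nat.factorial r : ℝ) * ((2:ℝ)^k*2^r)
                    = ((k:ℝ)^k*2^k) * ((2:ℝ)^r*(Nat.factorial r : ℝ)) := by ring
                  _ ≤ ((k:ℝ)^k*2^k) * (k:ℝ)^r := by
                      apply mul_le_mul_of_nonneg_left hkr (by positivity)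
                  _ = (k:ℝ)^k*(k:ℝ)^r*2^k := by ring
          _ ≤ F^(r+1) * ((s:ℝ)+1)^q := mul_le_mul_of_nonneg_left hq1 hFr.le
    _ = A * (Real.Gamma β * (1+β)^2) * (Nat.factorial c : ℝ) * F^(r+1) / (Nat.factorial r : ℝ) := by
        ring

theorem stmt_9 (τ γ a A b : ℝ) (hτ : -2 < τ) (hγ : 0 < γ)
    (ha : 0 < a) (hA : 0 < A)
    (f : ℕ → ℝ)
    (hf : ∀ k : ℕ, 1 ≤ k →
      |f k| ≤ A * (a / Real.exp 1) ^ k * (k : ℝ) ^ ((k : ℝ) + b + 1 / 2)) :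
    Summable (fun k : ℕ =>
      |(2 * ∫ t in Ioi (0 : ℝ),
          t ^ (τ + 4 * k + 1) * Real.exp (-t ^ 2 - γ * t ^ 6)) /
        Real.Gamma ((τ + 4 * k + 2) / 2) * f k|) := by
  rw [← summable_nat_add_iff 6]
  have hβ : (0:ℝ) < (τ+2)/2 := by linarith
  have hC1 : (0:ℝ) ≤ A * (Real.Gamma ((τ+2)/2) * (1+(τ+2)/2)^2) * (Nat.factorial ⌈b+1/2⌉₊) := by
    have := Real.Gamma_pos_of_pos hβ
    positivity
  have hF : (0:ℝ) ≤ max ((2*a*(max 1 γ⁻¹))^6) 1 := le_trans zero_le_one (le_max_right _ _)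
  apply Summable.of_nonneg_of_le (fun n => abs_nonneg _) _
    (aux_summable _ _ hC1 hF)
  intro n
  have h := key_bound τ γ a A b hτ hγ ha hA f hf (n+6) (by omega)
  have e : (n+6)/6 = n/6+1 := by omega
  rw [e] at h
  exact h
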